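/- Let P be a finite poset with n elements, ω : P → {1,...,n} a bijection, and ω̄ the complementary labeling defined by ω̄(v) = n + 1 − ω(v). Then for every positive integer k, Ω_{P,ω}(−k) = (−1)^{|P|} Ω_{P,ω̄}(k), where Ω_{P,ω}(−k) denotes the evaluation at −k of the polynomial agreeing with Ω_{P,ω} on positive integers. -/

import Mathlib

/-- A mixed graph on vertex set `V`: `E` are the undirected edges (a pair `{u,v}`
may be recorded as `E u v` or `E v u`), `A` are the arcs (directed edges). -/
structure MixedGraph (V : Type*) where
  E : V → V → Prop
  A : V → V → Prop

/-- A weak proper coloring: distinct colors along edges, weakly increasing along arcs. -/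
def MixedGraph.IsWeakColoring {V : Type*} (G : MixedGraph V) {k : ℕ} (c : V → Fin k) : Prop :=
  (∀ u v, G.E u v → c u ≠ c v) ∧ (∀ u v, G.A u v → c u ≤ c v)

/-- The weak chromatic counting function: the number of weak proper `k`-colorings. -/
noncomputable def MixedGraph.weakChi {V : Type*} (G : MixedGraph V) (k : ℕ) : ℕ :=
  Nat.card {c : V → Fin k // G.IsWeakColoring c}

/-- `O` is an orientation of the mixed graph `G`: it contains all arcs, orients every
undirected edge in exactly one of the two directions, and contains nothing else. -/
def MixedGraph.IsOrientation {V : Type*} (G : MixedGraph V) (O : V → V → Prop) : Prop :=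
  (∀ u v, G.A u v → O u v) ∧
  (∀ u v, G.E u v → (O u v ↔ ¬ O v u)) ∧
  (∀ u v, O u v → G.A u v ∨ G.E u v ∨ G.E v u)

/-- A relation is acyclic if it admits no directed cycle. -/
def IsAcyclicRel {V : Type*} (O : V → V → Prop) : Prop :=
  ∀ v, ¬ Relation.TransGen O v v

/-- A mixed graph is acyclic if all of its orientations are acyclic. -/
def MixedGraph.Acyclic {V : Type*} (G : MixedGraph V) : Prop :=
  ∀ O : V → V → Prop, G.IsOrientation O → IsAcyclicRel O

/-- A coloring `c` is intercompatible with an orientation `O` of `G` if for every `u → v`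
in `O` we have `c u ≤ c v` when `uv` is an undirected edge of `G`, and `c u < c v`
when `u → v` is an arc of `G`. -/
def MixedGraph.Intercompatible {V : Type*} (G : MixedGraph V) (O : V → V → Prop)
    {k : ℕ} (c : V → Fin k) : Prop :=
  ∀ u v, O u v → ((G.E u v ∨ G.E v u) → c u ≤ c v) ∧ (G.A u v → c u < c v)


open Finset

namespace SR

variable {n : ℕ}

/-- extension of `g : Fin n → ℕ` to all of `ℕ` -/
def Gx (g : Fin n → ℕ) (m : ℕ) : ℕ := if h : m < n then g ⟨m, h⟩ else 0

/-- descent set of `g`, as a finset of natural numbers `< n-1` -/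
def Dset (g : Fin n → ℕ) : Finset ℕ :=
  (Finset.range (n-1)).filter (fun m => Gx g (m+1) < Gx g m)

/-- number of descents -/
def dct (g : Fin n → ℕ) : ℕ := (Dset g).card

/-- number of descents below `i` -/
def csh (g : Fin n → ℕ) (i : ℕ) : ℕ := ((Dset g).filter (· < i)).card

lemma mem_Dset {g : Fin n → ℕ} {i j : Fin n} (hij : (j : ℕ) = (i : ℕ) + 1) :
    (i : ℕ) ∈ Dset g ↔ g j < g i := by
  have hj : (i : ℕ) + 1 < n := hij ▸ j.2
  have h1 : Gx g ((i : ℕ) + 1) = g j := by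
    rw [Gx, dif_pos hj]; congr 1; exact (Fin.ext hij.symm)
  have h2 : Gx g (i : ℕ) = g i := by rw [Gx, dif_pos i.2]
  simp only [Dset, mem_filter, mem_range, h1, h2]
  constructor
  · exact fun h => h.2
  · exact fun h => ⟨by omega, h⟩

lemma dct_le (g : Fin n → ℕ) : dct g ≤ n - 1 :=
  (Finset.card_filter_le _ _).trans (by simp)

lemma csh_le_dct (g : Fin n → ℕ) (i : ℕ) : csh g i ≤ dct g :=
  Finset.card_le_card (Finset.filter_subset _ _)

lemma csh_le (g : Fin n → ℕ) (i : ℕ) : csh g i ≤ i := by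
  refine (Finset.card_le_card (fun m hm => ?_)).trans (Finset.card_range i).le
  simp only [mem_filter] at hm
  simpa using hm.2

lemma csh_succ (g : Fin n → ℕ) (m : ℕ) :
    csh g (m+1) = csh g m + (if m ∈ Dset g then 1 else 0) := by
  classical
  have : (Dset g).filter (· < m+1) = (Dset g).filter (· < m) ∪ (Dset g).filter (· = m) := by
    rw [← Finset.filter_or]
    apply Finset.filter_congr
    intro x _
    constructor
    · intro h; omega
    · intro h; omega
  rw [csh, this, Finset.card_union_of_disjoint, Finset.filter_eq', csh]
  · congr 1
    split <;> simp
  · rw [Finset.disjoint_left]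
    intro a ha hb
    simp only [mem_filter] at ha hb
    omega

lemma dct_csh (g : Fin n → ℕ) (i : ℕ) (hi : i < n) : dct g + i ≤ csh g i + (n-1) := by
  classical
  have h1 : csh g i + ((Dset g).filter (fun m => ¬ m < i)).card = dct g :=
    Finset.card_filter_add_card_filter_not _
  have h2 : ((Dset g).filter (fun m => ¬ m < i)).card ≤ (n-1) - i := by
    refine (Finset.card_le_card (fun m hm => ?_)).trans (Nat.card_Ico i (n-1)).le
    simp only [mem_filter, Dset, mem_range, Finset.mem_Ico] at hm ⊢
    omega
  omega

/-- generic induction along a chain in `Fin n` -/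
lemma chain_ind {R : Fin n → Fin n → Prop} (hrefl : ∀ i, R i i)
    (hstep : ∀ i j l : Fin n, i ≤ j → (l : ℕ) = (j : ℕ) + 1 → R i j → R i l) :
    ∀ i j : Fin n, i ≤ j → R i j := by
  have key : ∀ t : ℕ, ∀ i j : Fin n, (j : ℕ) = (i : ℕ) + t → R i j := by
    intro t
    induction t with
    | zero => intro i j h; have : i = j := Fin.ext (by omega); subst this; exact hrefl i
    | succ t ih =>
      intro i j h
      have hm : (i : ℕ) + t < n := by omega
      set m : Fin n := ⟨(i : ℕ) + t, hm⟩ with hmdef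
      exact hstep i m j (by simp [hmdef, Fin.le_def]) (by simp [hmdef]; omega) (ih i m rfl)
  intro i j hij
  exact key ((j : ℕ) - (i : ℕ)) i j (by rw [Fin.le_def] at hij; omega)

/-- the compatibility condition for a sequence `y` along a sorted list with labels `g` -/
def Ycond (g : Fin n → ℕ) {k : ℕ} (y : Fin n → Fin k) : Prop :=
  ∀ i j : Fin n, i ≤ j → (y i ≤ y j ∧ (g j < g i → y i < y j))

lemma ycond_of_adj {g : Fin n → ℕ} {k : ℕ} {y : Fin n → Fin k}
    (h : ∀ i j : Fin n, (j : ℕ) = (i : ℕ) + 1 → (y i ≤ y j ∧ (g j < g i → y i < y j))) :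
    Ycond g y := by
  refine chain_ind (fun i => ⟨le_refl _, fun hc => absurd hc (lt_irrefl _)⟩) ?_
  intro i j l hij hl ⟨h1, h2⟩
  obtain ⟨h3, h4⟩ := h j l hl
  refine ⟨h1.trans h3, fun hg => ?_⟩
  rcases lt_or_ge (g l) (g j) with hlj | hlj'
  · exact lt_of_le_of_lt h1 (h4 hlj)
  · exact lt_of_lt_of_le (h2 (lt_of_le_of_lt hlj' hg)) h3


lemma ycond_plateau {g : Fin n → ℕ} (hg : Function.Injective g) {k : ℕ} {y : Fin n → Fin k}
    (hy : Ycond g y) {i j : Fin n} (hij : i < j) (he : y i = y j) : g i < g j := by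
  rcases lt_trichotomy (g i) (g j) with h | h | h
  · exact h
  · exact absurd (hg h) (Fin.ne_of_lt hij)
  · exact absurd ((hy i j hij.le).2 h) (by simp [he])

/-- gap lemma for sequences increasing at consecutive steps -/
lemma gap_lemma {M : ℕ} {z : Fin n → Fin M}
    (h : ∀ i j : Fin n, (j : ℕ) = (i : ℕ) + 1 → z i < z j) :
    ∀ i j : Fin n, i ≤ j → (z i : ℕ) + ((j : ℕ) - (i : ℕ)) ≤ (z j : ℕ) := by
  refine chain_ind (fun i => by omega) ?_
  intro i j l hij hl hzij
  have := h j l hl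
  rw [Fin.le_def] at hij
  rw [Fin.lt_def] at this
  omega

end SR
namespace SR

lemma card_strictMono (n M : ℕ) :
    Nat.card {z : Fin n → Fin M // StrictMono z} = M.choose n := by
  classical
  have e : {z : Fin n → Fin M // StrictMono z} ≃ {s : Finset (Fin M) // s.card = n} :=
    { toFun := fun z => ⟨Finset.univ.image z.1, by
        rw [Finset.card_image_of_injective _ z.2.injective, Finset.card_univ, Fintype.card_fin]⟩
      invFun := fun s => ⟨s.1.orderEmbOfFin s.2, (s.1.orderEmbOfFin s.2).strictMono⟩
      left_inv := fun z => by
        ext1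
        exact (Finset.orderEmbOfFin_unique _
          (fun x => Finset.mem_image_of_mem _ (Finset.mem_univ x)) z.2).symm
      right_inv := fun s => by
        ext1
        apply Finset.coe_injective
        rw [Finset.coe_image, Finset.coe_univ, Set.image_univ]
        exact Finset.range_orderEmbOfFin _ _ }
  rw [Nat.card_congr e, Nat.card_eq_fintype_card, Fintype.card_finset_len, Fintype.card_fin]

section

variable {n : ℕ} (g : Fin n → ℕ) {k : ℕ}

lemma sfacts (i : Fin n) : csh g i ≤ i ∧ dct g + i ≤ csh g i + (n-1) ∧ csh g i ≤ dct g
    ∧ dct g ≤ n - 1 :=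
  ⟨csh_le g i, dct_csh g i i.2, csh_le_dct g i, dct_le g⟩

lemma csh_adj {i j : Fin n} (hij : (j : ℕ) = (i : ℕ) + 1) :
    (g j < g i → csh g j = csh g i + 1) ∧ (¬ g j < g i → csh g j = csh g i) := by
  have h := csh_succ g i
  rw [← hij] at h
  constructor
  · intro hg; rw [h, if_pos ((mem_Dset hij).2 hg)]
  · intro hg
    rw [h, if_neg, Nat.add_zero]
    intro hd
    exact hg ((mem_Dset hij).1 hd)

variable (hk : 0 < k)

lemma zbound (y : Fin n → Fin k) (i : Fin n) :
    (y i : ℕ) + (i - csh g i) < k + n - 1 - dct g := by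
  obtain ⟨h1, h2, h3, h4⟩ := sfacts g i
  have h5 := (y i).2
  have h6 := i.2
  omega

include hk

lemma ybound (z : Fin n → Fin (k + n - 1 - dct g)) (hz : StrictMono z) (i : Fin n) :
    (z i : ℕ) - (i - csh g i) < k := by
  obtain ⟨h1, h2, h3, h4⟩ := sfacts g i
  have hn : 0 < n := i.pos
  have hadj : ∀ a b : Fin n, (b : ℕ) = (a : ℕ) + 1 → z a < z b :=
    fun a b hb => hz (Fin.lt_def.2 (by omega))
  set last : Fin n := ⟨n-1, by omega⟩ with hlastdef
  have hlv : (last : ℕ) = n - 1 := rfl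
  have hlast := gap_lemma hadj i last (Fin.le_def.2 (by rw [hlv]; omega))
  rw [hlv] at hlast
  have h5 := (z last).2
  have h6 := i.2
  omega

omit hk

lemma zge (z : Fin n → Fin (k + n - 1 - dct g)) (hz : StrictMono z) (i : Fin n) :
    (i : ℕ) ≤ z i := by
  have hn : 0 < n := i.pos
  have hadj : ∀ a b : Fin n, (b : ℕ) = (a : ℕ) + 1 → z a < z b :=
    fun a b hb => hz (Fin.lt_def.2 (by omega))
  set zro : Fin n := ⟨0, hn⟩ with hzrodef
  have hzv : (zro : ℕ) = 0 := rfl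
  have := gap_lemma hadj zro i (Fin.le_def.2 (by rw [hzv]; omega))
  rw [hzv] at this
  omega

include hk

lemma card_ycond :
    Nat.card {y : Fin n → Fin k // Ycond g y} = (k + n - 1 - dct g).choose n := by
  classical
  set M := k + n - 1 - dct g with hM
  have e : {y : Fin n → Fin k // Ycond g y} ≃ {z : Fin n → Fin M // StrictMono z} :=
    { toFun := fun y => ⟨fun i => ⟨(y.1 i : ℕ) + (i - csh g i), zbound g y.1 i⟩, by
        have adj : ∀ i j : Fin n, (j : ℕ) = (i : ℕ) + 1 →
            ((y.1 i : ℕ) + ((i : ℕ) - csh g i)) < ((y.1 j : ℕ) + ((j : ℕ) - csh g j)) := by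
          intro i j hij
          obtain ⟨h1, h2, h3, h4⟩ := sfacts g i
          obtain ⟨hc1, hc2⟩ := csh_adj g hij
          have hy1 : (y.1 i : ℕ) ≤ y.1 j := (y.2 i j (Fin.le_def.2 (by omega))).1
          by_cases hg : g j < g i
          · have hy2 : (y.1 i : ℕ) < y.1 j := (y.2 i j (Fin.le_def.2 (by omega))).2 hg
            have := hc1 hg
            omega
          · have := hc2 hg
            omega
        intro i j hij
        rw [Fin.lt_def] at hij
        apply Fin.lt_def.2
        show ((y.1 i : ℕ) + ((i : ℕ) - csh g i)) < ((y.1 j : ℕ) + ((j : ℕ) - csh g j))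
        have := gap_lemma (z := fun i => (⟨(y.1 i : ℕ) + (i - csh g i), zbound g y.1 i⟩ : Fin M))
          (fun a b hb => Fin.lt_def.2 (adj a b hb)) i j (Fin.le_def.2 (by omega))
        simp only at this
        omega⟩
      invFun := fun z => ⟨fun i => ⟨(z.1 i : ℕ) - (i - csh g i), ybound g hk z.1 z.2 i⟩, by
        apply ycond_of_adj
        intro i j hij
        obtain ⟨h1, h2, h3, h4⟩ := sfacts g i
        obtain ⟨hc1, hc2⟩ := csh_adj g hij
        have hz : (z.1 i : ℕ) < (z.1 j : ℕ) := Fin.lt_def.1 (z.2 (Fin.lt_def.2 (by omega)))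
        constructor
        · apply Fin.le_def.2
          show ((z.1 i : ℕ) - ((i : ℕ) - csh g i)) ≤ ((z.1 j : ℕ) - ((j : ℕ) - csh g j))
          by_cases hg : g j < g i
          · have := hc1 hg; omega
          · have := hc2 hg; omega
        · intro hg
          apply Fin.lt_def.2
          show ((z.1 i : ℕ) - ((i : ℕ) - csh g i)) < ((z.1 j : ℕ) - ((j : ℕ) - csh g j))
          have := hc1 hg
          have hzi := zge g z.1 z.2 i
          omega⟩
      left_inv := fun y => by
        apply Subtype.ext
        funext i
        apply Fin.ext
        show ((y.1 i : ℕ) + ((i : ℕ) - csh g i)) - ((i : ℕ) - csh g i) = (y.1 i : ℕ)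
        omega
      right_inv := fun z => by
        apply Subtype.ext
        funext i
        apply Fin.ext
        show ((z.1 i : ℕ) - ((i : ℕ) - csh g i)) + ((i : ℕ) - csh g i) = (z.1 i : ℕ)
        have hzi := zge g z.1 z.2 i
        have h1 := csh_le g (i : ℕ)
        omega }
  rw [Nat.card_congr e, card_strictMono]

end

end SR
namespace SR

lemma nat_card_sigma {ι : Type*} [Fintype ι] (T : ι → Type*) [∀ i, Finite (T i)] :
    Nat.card (Σ i, T i) = ∑ i, Nat.card (T i) := by
  classical
  letI : ∀ i, Fintype (T i) := fun i => Fintype.ofFinite (T i)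
  rw [Nat.card_eq_fintype_card, Fintype.card_sigma]
  simp [Nat.card_eq_fintype_card]

section PosetPart

variable {P : Type*} [Fintype P] [PartialOrder P]

/-- the (P,ω)-partition condition with labeling `f` -/
def Cond (f : P → ℕ) {k : ℕ} (x : P → Fin k) : Prop :=
  ∀ u v : P, u ≤ v → (f u < f v → x u ≤ x v) ∧ (f v < f u → x u < x v)

/-- linear extensions of `P` -/
def LinExt (P : Type*) [Fintype P] [PartialOrder P] : Type _ :=
  {w : Fin (Fintype.card P) ≃ P // ∀ i j : Fin (Fintype.card P), w i ≤ w j → i ≤ j}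

instance : Finite (LinExt P) :=
  Subtype.finite (α := Fin (Fintype.card P) ≃ P)

noncomputable instance : Fintype (LinExt P) := by
  classical
  exact Fintype.ofFinite _

/-- packaging a linear extension and a compatible sequence into a `(P,ω)`-partition -/
noncomputable def Phi (f : P → ℕ) (k : ℕ)
    (s : Σ w : LinExt P, {y : Fin (Fintype.card P) → Fin k //
      Ycond (fun i => f (w.1 i)) y}) :
    {x : P → Fin k // Cond f x} := by
  refine ⟨fun v => s.2.1 (s.1.1.symm v), ?_⟩
  intro u v huv
  have hij : s.1.1.symm u ≤ s.1.1.symm v := by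
    apply s.1.2
    rw [Equiv.apply_symm_apply, Equiv.apply_symm_apply]
    exact huv
  obtain ⟨h1, h2⟩ := s.2.2 _ _ hij
  refine ⟨fun _ => h1, fun hg => ?_⟩
  apply h2
  simp only [Equiv.apply_symm_apply]
  exact hg

lemma Phi_bijective (f : P → ℕ) (hf : Function.Injective f) (k : ℕ) :
    Function.Bijective (Phi f k) := by
  classical
  constructor
  · -- injectivity
    rintro ⟨w1, y1, hy1⟩ ⟨w2, y2, hy2⟩ heq
    have hxy : (fun v => y1 (w1.1.symm v)) = (fun v => y2 (w2.1.symm v)) :=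
      congrArg Subtype.val heq
    set x : P → Fin k := fun v => y1 (w1.1.symm v) with hxdef
    set F : P → Lex (Fin k × ℕ) := fun v => toLex (x v, f v) with hFdef
    have hFinj : Function.Injective F := by
      intro a b hab
      have : (x a, f a) = (x b, f b) := hab
      exact hf (congrArg Prod.snd this)
    set s : Finset (Lex (Fin k × ℕ)) := Finset.univ.image F with hsdef
    have hs : s.card = Fintype.card P := by
      rw [hsdef, Finset.card_image_of_injective _ hFinj, Finset.card_univ]
    have key : ∀ (w : LinExt P) (y : Fin (Fintype.card P) → Fin k),
        Ycond (fun i => f (w.1 i)) y → (∀ v, x v = y (w.1.symm v)) →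
        (fun i => F (w.1 i)) = s.orderEmbOfFin hs := by
      intro w y hy hxw
      apply Finset.orderEmbOfFin_unique
      · intro i
        rw [hsdef]
        exact Finset.mem_image_of_mem _ (Finset.mem_univ _)
      · intro i j hij
        have hxi : x (w.1 i) = y i := by rw [hxw, Equiv.symm_apply_apply]
        have hxj : x (w.1 j) = y j := by rw [hxw, Equiv.symm_apply_apply]
        have h1 : y i ≤ y j := (hy i j hij.le).1
        rw [hFdef]
        simp only
        rcases lt_or_eq_of_le h1 with h | h
        · apply Prod.Lex.lt_iff.2
          left
          rw [hxi, hxj]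
          exact h
        · apply Prod.Lex.lt_iff.2
          right
          constructor
          · rw [hxi, hxj]; exact h
          · exact ycond_plateau (hf.comp w.1.injective) hy hij h
    have h1 := key w1 y1 hy1 (fun v => rfl)
    have h2 := key w2 y2 hy2 (fun v => congrFun hxy v)
    have hww : w1 = w2 := by
      apply Subtype.ext
      apply Equiv.ext
      intro i
      apply hFinj
      exact (congrFun h1 i).trans (congrFun h2 i).symm
    subst hww
    have hyy : y1 = y2 := by
      funext i
      have e1 : y1 i = x (w1.1 i) := by rw [hxdef]; simp
      have e2 : y2 i = x (w1.1 i) := by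
        rw [congrFun hxy (w1.1 i)]
        simp
      rw [e1, e2]
    subst hyy
    rfl
  · -- surjectivity
    rintro ⟨x, hx⟩
    rcases isEmpty_or_nonempty P with hP | hP
    · haveI : IsEmpty (Fin (Fintype.card P)) := by
        rw [Fintype.card_eq_zero]
        infer_instance
      refine ⟨⟨⟨Equiv.equivOfIsEmpty _ _, fun i => isEmptyElim i⟩,
        ⟨fun i => isEmptyElim i, fun i => isEmptyElim i⟩⟩, ?_⟩
      apply Subtype.ext
      funext v
      exact isEmptyElim v
    set F : P → Lex (Fin k × ℕ) := fun v => toLex (x v, f v) with hFdef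
    have hFinj : Function.Injective F := by
      intro a b hab
      have : (x a, f a) = (x b, f b) := hab
      exact hf (congrArg Prod.snd this)
    set s : Finset (Lex (Fin k × ℕ)) := Finset.univ.image F with hsdef
    have hs : s.card = Fintype.card P := by
      rw [hsdef, Finset.card_image_of_injective _ hFinj, Finset.card_univ]
    set e := s.orderEmbOfFin hs with hedef
    set u : Fin (Fintype.card P) → P := fun i => Function.invFun F (e i) with hudef
    have hFu : ∀ i, F (u i) = e i := by
      intro i
      apply Function.invFun_eq
      have : e i ∈ s := Finset.orderEmbOfFin_mem s hs i
      rw [hsdef] at this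
      obtain ⟨v, _, hv⟩ := Finset.mem_image.1 this
      exact ⟨v, hv⟩
    have huinj : Function.Injective u := by
      intro a b hab
      apply e.injective
      rw [← hFu, ← hFu, hab]
    have hubij : Function.Bijective u :=
      (Fintype.bijective_iff_injective_and_card u).2 ⟨huinj, by simp⟩
    have hmono : ∀ v v' : P, v ≤ v' → F v ≤ F v' := by
      intro v v' hvv
      rcases eq_or_ne v v' with rfl | hne
      · exact le_refl _
      · obtain ⟨hc1, hc2⟩ := hx v v' hvv
        rcases (hf.ne_iff.2 hne).lt_or_gt with h | h
        · rcases lt_or_eq_of_le (hc1 h) with h' | h'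
          · exact le_of_lt (Prod.Lex.lt_iff.2 (Or.inl h'))
          · exact Prod.Lex.le_iff.2 (Or.inr ⟨h', le_of_lt h⟩)
        · exact le_of_lt (Prod.Lex.lt_iff.2 (Or.inl (hc2 h)))
    have hlin : ∀ i j, u i ≤ u j → i ≤ j := by
      intro i j hij
      by_contra hc
      push_neg at hc
      have h1 : e j < e i := e.strictMono hc
      rw [← hFu, ← hFu] at h1
      exact absurd (hmono _ _ hij) (not_le_of_gt h1)
    set weq := Equiv.ofBijective u hubij with hweq
    have hy : Ycond (fun i => f (weq i)) (fun i => x (u i)) := by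
      intro i j hij
      have hFle : F (u i) ≤ F (u j) := by rw [hFu, hFu]; exact e.monotone hij
      have hFle' := Prod.Lex.le_iff.1 hFle
      constructor
      · rcases hFle' with h | ⟨h1, h2⟩
        · exact le_of_lt h
        · exact le_of_eq h1
      · intro hg
        rcases hFle' with h | ⟨h1, h2⟩
        · exact h
        · exact absurd h2 (not_le_of_gt hg)
    refine ⟨⟨⟨weq, hlin⟩, ⟨fun i => x (u i), hy⟩⟩, ?_⟩
    apply Subtype.ext
    funext v
    show x (u (weq.symm v)) = x v
    have : u (weq.symm v) = weq (weq.symm v) := rfl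
    rw [this, Equiv.apply_symm_apply]

lemma card_cond (f : P → ℕ) (hf : Function.Injective f) {k : ℕ} (hk : 0 < k) :
    Nat.card {x : P → Fin k // Cond f x} =
      ∑ w : LinExt P,
        (k + Fintype.card P - 1 - dct (fun i => f (w.1 i))).choose (Fintype.card P) := by
  classical
  rw [← Nat.card_eq_of_bijective (Phi f k) (Phi_bijective f hf k), nat_card_sigma]
  exact Finset.sum_congr rfl (fun w _ => card_ycond _ hk)

end PosetPart

end SR
namespace SR

open Polynomial

/-- the basic polynomial `(1/n!) ∏ (X + i - d)` -/
noncomputable def Bpoly (n d : ℕ) : Polynomial ℚ :=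
  Polynomial.C ((n.factorial : ℚ))⁻¹ *
    ∏ i ∈ Finset.range n, (Polynomial.X + Polynomial.C ((i : ℚ) - (d : ℚ)))

lemma Bpoly_eval_nat (n d k : ℕ) (hk : 0 < k) (hd : d ≤ n - 1) :
    (Bpoly n d).eval (k : ℚ) = ((k + n - 1 - d).choose n : ℚ) := by
  simp only [Bpoly, Polynomial.eval_mul, Polynomial.eval_C, Polynomial.eval_prod,
    Polynomial.eval_add, Polynomial.eval_X]
  rcases le_or_gt k d with hkd | hkd
  · -- a zero factor
    have hn : 0 < n := by omega
    have hmem : d - k ∈ Finset.range n := by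
      simp only [Finset.mem_range]; omega
    have hzero : (k : ℚ) + (((d - k : ℕ) : ℚ) - (d : ℚ)) = 0 := by
      have : ((d - k : ℕ) : ℚ) = (d : ℚ) - (k : ℚ) := by
        push_cast [Nat.cast_sub hkd]; ring
      rw [this]; ring
    rw [Finset.prod_eq_zero hmem hzero, mul_zero]
    rw [Nat.choose_eq_zero_of_lt (by omega), Nat.cast_zero]
  · -- all factors positive
    have hcast : ∀ i ∈ Finset.range n, (k : ℚ) + ((i : ℚ) - (d : ℚ)) = ((k - d + i : ℕ) : ℚ) := by
      intro i _
      push_cast [Nat.cast_sub hkd.le]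
      ring
    rw [Finset.prod_congr rfl hcast, ← Nat.cast_prod]
    have hprod : ∏ i ∈ Finset.range n, (k - d + i) = (k + n - 1 - d).descFactorial n := by
      rw [Nat.descFactorial_eq_prod_range, ← Finset.prod_range_reflect]
      apply Finset.prod_congr rfl
      intro i hi
      simp only [Finset.mem_range] at hi
      omega
    rw [hprod, Nat.descFactorial_eq_factorial_mul_choose, Nat.cast_mul]
    rw [← mul_assoc, inv_mul_cancel₀ (by exact_mod_cast n.factorial_ne_zero), one_mul]

lemma Bpoly_eval_neg (n d k : ℕ) (hd : d ≤ n - 1) :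
    (Bpoly n d).eval (-(k : ℚ)) = (-1)^n * (Bpoly n (n - 1 - d)).eval (k : ℚ) := by
  simp only [Bpoly, Polynomial.eval_mul, Polynomial.eval_C, Polynomial.eval_prod,
    Polynomial.eval_add, Polynomial.eval_X]
  rcases Nat.eq_zero_or_pos n with rfl | hn
  · simp
  have hstep : ∀ i ∈ Finset.range n,
      -(k : ℚ) + ((i : ℚ) - (d : ℚ)) =
        (-1) * ((k : ℚ) + (((n - 1 - i : ℕ) : ℚ) - ((n - 1 - d : ℕ) : ℚ))) := by
    intro i hi
    simp only [Finset.mem_range] at hi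
    have h1 : ((n - 1 - i : ℕ) : ℚ) = (n : ℚ) - 1 - (i : ℚ) := by
      push_cast [Nat.cast_sub (by omega : i ≤ n - 1), Nat.cast_sub (by omega : 1 ≤ n)]
      ring
    have h2 : ((n - 1 - d : ℕ) : ℚ) = (n : ℚ) - 1 - (d : ℚ) := by
      push_cast [Nat.cast_sub hd, Nat.cast_sub (by omega : 1 ≤ n)]
      ring
    rw [h1, h2]; ring
  rw [Finset.prod_congr rfl hstep, Finset.prod_mul_distrib, Finset.prod_const]
  rw [Finset.card_range]
  rw [← Finset.prod_range_reflect (fun j => (k : ℚ) + ((j : ℚ) - ((n - 1 - d : ℕ) : ℚ))) n]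
  ring

lemma dct_compl {n : ℕ} (g g' : Fin n → ℕ) (hg : Function.Injective g)
    (hr : ∀ i j : Fin n, g' i < g' j ↔ g j < g i) :
    dct g' = (n - 1) - dct g := by
  have hsub : Dset g ⊆ Finset.range (n-1) := Finset.filter_subset _ _
  have hset : Dset g' = (Finset.range (n-1)) \ Dset g := by
    ext m
    simp only [Dset, Finset.mem_filter, Finset.mem_sdiff, Finset.mem_range]
    constructor
    · rintro ⟨hm, hlt⟩
      refine ⟨hm, fun hc => ?_⟩
      have hm1 : m + 1 < n := by omega
      have hmn : m < n := by omega
      rw [Gx, Gx, dif_pos hm1, dif_pos hmn] at hlt hc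
      exact absurd (hc.2.trans ((hr _ _).1 hlt)) (lt_irrefl _)
    · rintro ⟨hm, hc⟩
      have hm1 : m + 1 < n := by omega
      have hmn : m < n := by omega
      refine ⟨hm, ?_⟩
      rw [Gx, Gx, dif_pos hm1, dif_pos hmn]
      rw [hr]
      rcases lt_trichotomy (g ⟨m, hmn⟩) (g ⟨m+1, hm1⟩) with h | h | h
      · exact h
      · exact absurd (hg h) (by simp [Fin.ext_iff])
      · exact absurd ⟨hm, by rw [Gx, Gx, dif_pos hm1, dif_pos hmn]; exact h⟩ hc
  rw [dct, hset, Finset.card_sdiff_of_subset hsub, Finset.card_range, dct]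

end SR
/-- Stanley's reciprocity for order polynomials:
`Ω_{P,ω}(-k) = (-1)^{|P|} Ω_{P,ω̄}(k)`, where `ω̄ = Fin.rev ∘ ω` is the complementary
labeling `ω̄(v) = n + 1 - ω(v)`. -/
theorem stmt10 {P : Type*} [Fintype P] [PartialOrder P]
    (ω : P ≃ Fin (Fintype.card P)) (p : Polynomial ℚ)
    (hp : ∀ k : ℕ, 0 < k →
      p.eval (k : ℚ) =
        Nat.card {x : P → Fin k // ∀ u v : P, u ≤ v →
          (ω u < ω v → x u ≤ x v) ∧ (ω v < ω u → x u < x v)})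
    (k : ℕ) (hk : 0 < k) :
    p.eval (-(k : ℚ)) =
      (-1) ^ Fintype.card P *
        Nat.card {x : P → Fin k // ∀ u v : P, u ≤ v →
          ((ω u).rev < (ω v).rev → x u ≤ x v) ∧ ((ω v).rev < (ω u).rev → x u < x v)} := by
  classical
  set f : P → ℕ := fun v => ((ω v) : ℕ) with hfdef
  set f' : P → ℕ := fun v => ((ω v).rev : ℕ) with hf'def
  have hf : Function.Injective f := fun a b h => ω.injective (Fin.ext h)
  have hf' : Function.Injective f' := fun a b h =>
    ω.injective (Fin.rev_injective (Fin.ext h))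
  have hcard1 : ∀ (m : ℕ), 0 < m →
      Nat.card {x : P → Fin m // ∀ u v : P, u ≤ v →
          (ω u < ω v → x u ≤ x v) ∧ (ω v < ω u → x u < x v)} =
        ∑ w : SR.LinExt P, (m + (Fintype.card P) - 1 - SR.dct (fun i => f (w.1 i))).choose (Fintype.card P) := by
    intro m hm
    exact SR.card_cond f hf hm
  have hcard2 :
      Nat.card {x : P → Fin k // ∀ u v : P, u ≤ v →
          ((ω u).rev < (ω v).rev → x u ≤ x v) ∧ ((ω v).rev < (ω u).rev → x u < x v)} =
        ∑ w : SR.LinExt P, (k + (Fintype.card P) - 1 - SR.dct (fun i => f' (w.1 i))).choose (Fintype.card P) :=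
    SR.card_cond f' hf' hk
  set q : Polynomial ℚ :=
    ∑ w : SR.LinExt P, SR.Bpoly (Fintype.card P) (SR.dct (fun i => f (w.1 i))) with hqdef
  have hqe : ∀ (m : ℕ), 0 < m → q.eval (m : ℚ) =
      ∑ w : SR.LinExt P,
        (((m + (Fintype.card P) - 1 - SR.dct (fun i => f (w.1 i))).choose (Fintype.card P) : ℕ) : ℚ) := by
    intro m hm
    rw [hqdef, Polynomial.eval_finset_sum]
    exact Finset.sum_congr rfl fun w _ => SR.Bpoly_eval_nat (Fintype.card P) _ m hm (SR.dct_le _)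
  have hpq : p = q := by
    apply Polynomial.eq_of_infinite_eval_eq
    apply Set.infinite_of_injective_forall_mem (f := fun m : ℕ => ((m + 1 : ℕ) : ℚ))
    · intro a b h
      simp only at h
      have : (a + 1 : ℕ) = (b + 1 : ℕ) := Nat.cast_injective h
      exact Nat.succ_injective this
    · intro m
      show p.eval (((m + 1 : ℕ) : ℚ)) = q.eval (((m + 1 : ℕ) : ℚ))
      rw [hp (m+1) (Nat.succ_pos m), hqe (m+1) (Nat.succ_pos m), hcard1 (m+1) (Nat.succ_pos m)]
      push_cast
      ring
  have hdcompl : ∀ w : SR.LinExt P,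
      SR.dct (fun i => f' (w.1 i)) = ((Fintype.card P) - 1) - SR.dct (fun i => f (w.1 i)) := by
    intro w
    apply SR.dct_compl _ _ (hf.comp w.1.injective)
    intro i j
    show f' (w.1 i) < f' (w.1 j) ↔ f (w.1 j) < f (w.1 i)
    have h1 : f' (w.1 i) = (Fintype.card P) - (f (w.1 i) + 1) := by
      rw [hf'def, hfdef]
      simp [Fin.val_rev]
    have h2 : f' (w.1 j) = (Fintype.card P) - (f (w.1 j) + 1) := by
      rw [hf'def, hfdef]
      simp [Fin.val_rev]
    have h3 : f (w.1 i) < (Fintype.card P) := (ω (w.1 i)).2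
    have h4 : f (w.1 j) < (Fintype.card P) := (ω (w.1 j)).2
    rw [h1, h2]
    clear_value f f' q
    clear hp hcard1 hcard2 hqe hpq hqdef hfdef hf'def hf hf'
    omega
  rw [hpq, hqdef, Polynomial.eval_finset_sum]
  rw [hcard2]
  push_cast
  rw [Finset.mul_sum]
  apply Finset.sum_congr rfl
  intro w _
  rw [SR.Bpoly_eval_neg (Fintype.card P) _ k (SR.dct_le _),
    SR.Bpoly_eval_nat (Fintype.card P) _ k hk (Nat.sub_le _ _), hdcompl w]
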